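/- Let (X_i)_{i∈ℤ} be a sequence of integrable real random variables adapted to a non-decreasing filtration (F_i)_{i∈ℤ}, fix an integer m ≥ 1, and set Y_k = X_k − E(X_k|F_{k−m}), θ_k = ∑_{j=k}^{k+m−1} E(Y_j|F_k), Q_k = θ_k − Y_k, S_k = ∑_{j=1}^k X_j (S_0 = 0, and S_{k+m−1} − S_{k−1} = ∑_{j=k}^{k+m−1} X_j), and P_k(X) = E(X|F_k) − E(X|F_{k−1}). Then, almost surely: (a) E(Y_j|F_k) = 0 for all j ≥ k + m, so θ_k = ∑_{j=k}^∞ E(Y_j|F_k); (b) E(θ_k|F_{k−1}) = θ_{k−1} − Y_{k−1}; (c) θ_k − E(θ_k|F_{k−1}) = P_k(S_{k+m−1} − S_{k−1}); and (d) ∑_{i=1}^n Y_i = M_n + Q_0 − Q_n, where M_n = ∑_{k=1}^n (θ_k − E(θ_k|F_{k−1})) is a martingale with respect to (F_n). -/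

import Mathlib

open MeasureTheory Filter Topology ENNReal

private lemma intIco_succ_top {M : Type*} [AddCommMonoid M] {a b : ℤ} (h : a ≤ b) (f : ℤ → M) :
    ∑ x ∈ Finset.Ico a (b + 1), f x = (∑ x ∈ Finset.Ico a b, f x) + f b := by
  have hins : Finset.Ico a (b + 1) = insert b (Finset.Ico a b) := by
    ext x; simp only [Finset.mem_Ico, Finset.mem_insert]; omega
  rw [hins, Finset.sum_insert (by simp), add_comm]

private lemma intIco_succ_bot {M : Type*} [AddCommMonoid M] {a b : ℤ} (h : a < b) (f : ℤ → M) :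
    ∑ x ∈ Finset.Ico a b, f x = f a + ∑ x ∈ Finset.Ico (a + 1) b, f x := by
  have hins : Finset.Ico a b = insert a (Finset.Ico (a + 1) b) := by
    ext x; simp only [Finset.mem_Ico, Finset.mem_insert]; omega
  rw [hins, Finset.sum_insert (by simp)]

theorem stmt13
    {Ω : Type*} {m0 : MeasurableSpace Ω} (μ : Measure Ω) [IsProbabilityMeasure μ]
    (ℱ : Filtration ℤ m0)
    (X : ℤ → Ω → ℝ)
    (hint : ∀ k, Integrable (X k) μ)
    (hadp : Adapted ℱ X)
    (m : ℕ) (hm : 1 ≤ m)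
    (Y θ Q : ℤ → Ω → ℝ)
    (hY : ∀ k : ℤ, Y k = X k - μ[X k | ℱ (k - m)])
    (hθ : ∀ k : ℤ, θ k = ∑ j ∈ Finset.Ico k (k + m), μ[Y j | ℱ k])
    (hQ : ∀ k : ℤ, Q k = θ k - Y k)
    (M : ℕ → Ω → ℝ)
    (hM : ∀ n ω, M n ω = ∑ k ∈ Finset.Icc 1 n,
      (θ (k : ℤ) ω - (μ[θ (k : ℤ) | ℱ ((k : ℤ) - 1)]) ω)) :
    (∀ k j : ℤ, k + m ≤ j → μ[Y j | ℱ k] =ᵐ[μ] 0) ∧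
    (∀ k : ℤ, μ[θ k | ℱ (k - 1)] =ᵐ[μ] θ (k - 1) - Y (k - 1)) ∧
    (∀ k : ℤ, θ k - μ[θ k | ℱ (k - 1)] =ᵐ[μ]
      μ[(∑ j ∈ Finset.Ico k (k + m), X j) | ℱ k] -
        μ[(∑ j ∈ Finset.Ico k (k + m), X j) | ℱ (k - 1)]) ∧
    ((∀ n : ℕ, ∀ᵐ ω ∂μ,
        ∑ i ∈ Finset.Icc 1 n, Y (i : ℤ) ω = M n ω + Q 0 ω - Q (n : ℤ) ω) ∧
      Martingale M
        ⟨fun n : ℕ => ℱ (n : ℤ),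
          fun n₁ n₂ h => ℱ.mono (by exact_mod_cast h),
          fun n => ℱ.le _⟩ μ) := by
  have hm1 : (1 : ℤ) ≤ (m : ℤ) := by exact_mod_cast hm
  have hYint : ∀ k, Integrable (Y k) μ := by
    intro k; rw [hY]; exact (hint k).sub integrable_condExp
  have hθint : ∀ k, Integrable (θ k) μ := by
    intro k; rw [hθ]; exact integrable_finset_sum' _ fun j _ => integrable_condExp
  have hYmeas : ∀ k, StronglyMeasurable[ℱ k] (Y k) := by
    intro k; rw [hY]
    exact (hadp k).stronglyMeasurable.sub (stronglyMeasurable_condExp.mono (ℱ.mono (by linarith)))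
  -- part (a)
  have ha : ∀ k j : ℤ, k + m ≤ j → μ[Y j | ℱ k] =ᵐ[μ] 0 := by
    intro k j hkj
    have h1 : μ[Y j | ℱ k] =ᵐ[μ] μ[X j | ℱ k] - μ[μ[X j | ℱ (j - m)] | ℱ k] := by
      rw [hY]; exact condExp_sub (hint j) integrable_condExp _
    have h2 : μ[μ[X j | ℱ (j - m)] | ℱ k] =ᵐ[μ] μ[X j | ℱ k] :=
      condExp_condExp_of_le (ℱ.mono (by linarith)) (ℱ.le _)
    filter_upwards [h1, h2] with ω h1ω h2ω
    simp only [Pi.sub_apply, Pi.zero_apply] at *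
    rw [h1ω, h2ω]; ring
  -- key computation: μ[θ k | ℱ (k-1)] as a sum of conditional expectations
  have hsum : ∀ k : ℤ, μ[θ k | ℱ (k - 1)] =ᵐ[μ]
      ∑ j ∈ Finset.Ico k (k + m), μ[Y j | ℱ (k - 1)] := by
    intro k
    rw [hθ]
    refine (condExp_finsetSum (fun j _ => integrable_condExp) _).trans ?_
    exact eventuallyEq_sum fun j _ =>
      condExp_condExp_of_le (ℱ.mono (by linarith)) (ℱ.le _)
  -- part (b)
  have hb : ∀ k : ℤ, μ[θ k | ℱ (k - 1)] =ᵐ[μ] θ (k - 1) - Y (k - 1) := by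
    intro k
    have hsplit : ∑ j ∈ Finset.Ico k (k + m), μ[Y j | ℱ (k - 1)]
        = (∑ j ∈ Finset.Ico k (k + m - 1), μ[Y j | ℱ (k - 1)]) + μ[Y (k + m - 1) | ℱ (k - 1)] := by
      have := intIco_succ_top (a := k) (b := k + m - 1) (by linarith)
        (fun j => μ[Y j | ℱ (k - 1)])
      simpa [show k + (m:ℤ) - 1 + 1 = k + m by ring] using this
    have htop : μ[Y (k + m - 1) | ℱ (k - 1)] =ᵐ[μ] 0 := ha (k - 1) _ (by linarith)
    have hbot : θ (k - 1) = μ[Y (k - 1) | ℱ (k - 1)]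
        + ∑ j ∈ Finset.Ico k (k + m - 1), μ[Y j | ℱ (k - 1)] := by
      rw [hθ]
      have := intIco_succ_bot (a := k - 1) (b := k - 1 + m) (by linarith)
        (fun j => μ[Y j | ℱ (k - 1)])
      simpa [show k - 1 + 1 = k by ring, show k - 1 + (m:ℤ) = k + m - 1 by ring] using this
    have hYsm : μ[Y (k - 1) | ℱ (k - 1)] = Y (k - 1) :=
      condExp_of_stronglyMeasurable (ℱ.le _) (hYmeas _) (hYint _)
    filter_upwards [hsum k, htop] with ω h1ω h2ω
    have := hbot
    simp only [Pi.sub_apply]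
    rw [h1ω]
    have hb' : θ (k - 1) ω = Y (k - 1) ω
        + ∑ j ∈ Finset.Ico k (k + m - 1), (μ[Y j | ℱ (k - 1)]) ω := by
      rw [hbot, hYsm]; simp [Finset.sum_apply]
    rw [congrFun hsplit ω] at *
    simp only [Pi.add_apply, Pi.zero_apply] at *
    rw [hb', h2ω]
    simp [Finset.sum_apply]
  -- part (c)
  have hc : ∀ k : ℤ, θ k - μ[θ k | ℱ (k - 1)] =ᵐ[μ]
      μ[(∑ j ∈ Finset.Ico k (k + m), X j) | ℱ k] -
        μ[(∑ j ∈ Finset.Ico k (k + m), X j) | ℱ (k - 1)] := by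
    intro k
    have hYj : ∀ j ∈ Finset.Ico k (k + m), ∀ l : ℤ, k - 1 ≤ l →
        μ[Y j | ℱ l] =ᵐ[μ] μ[X j | ℱ l] - μ[X j | ℱ (j - m)] := by
      intro j hj l hl
      rw [Finset.mem_Ico] at hj
      have h1 : μ[Y j | ℱ l] =ᵐ[μ] μ[X j | ℱ l] - μ[μ[X j | ℱ (j - m)] | ℱ l] := by
        rw [hY]; exact condExp_sub (hint j) integrable_condExp _
      have h2 : μ[μ[X j | ℱ (j - m)] | ℱ l] = μ[X j | ℱ (j - m)] :=
        condExp_of_stronglyMeasurable (ℱ.le _)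
          (stronglyMeasurable_condExp.mono (ℱ.mono (by omega))) integrable_condExp
      rw [h2] at h1; exact h1
    have hθk : θ k =ᵐ[μ] ∑ j ∈ Finset.Ico k (k + m),
        (μ[X j | ℱ k] - μ[X j | ℱ (j - m)]) := by
      rw [hθ]
      exact eventuallyEq_sum fun j hj => hYj j hj k (by omega)
    have hθk' : μ[θ k | ℱ (k - 1)] =ᵐ[μ] ∑ j ∈ Finset.Ico k (k + m),
        (μ[X j | ℱ (k - 1)] - μ[X j | ℱ (j - m)]) :=
      (hsum k).trans (eventuallyEq_sum fun j hj => hYj j hj (k - 1) le_rfl)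
    have hck : μ[(∑ j ∈ Finset.Ico k (k + m), X j) | ℱ k] =ᵐ[μ]
        ∑ j ∈ Finset.Ico k (k + m), μ[X j | ℱ k] :=
      condExp_finsetSum (fun j _ => hint j) _
    have hck' : μ[(∑ j ∈ Finset.Ico k (k + m), X j) | ℱ (k - 1)] =ᵐ[μ]
        ∑ j ∈ Finset.Ico k (k + m), μ[X j | ℱ (k - 1)] :=
      condExp_finsetSum (fun j _ => hint j) _
    filter_upwards [hθk, hθk', hck, hck'] with ω h1 h2 h3 h4
    simp only [Pi.sub_apply, Finset.sum_apply, Pi.sub_apply] at *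
    rw [h1, h2, h3, h4, ← Finset.sum_sub_distrib, ← Finset.sum_sub_distrib]
    exact Finset.sum_congr rfl fun j _ => by ring
  refine ⟨ha, hb, hc, ?_, ?_⟩
  -- part (d): decomposition
  · intro n
    induction n with
    | zero =>
      filter_upwards with ω
      simp [hM, hQ]
    | succ n ih =>
      have hbn := hb ((n : ℤ) + 1)
      filter_upwards [ih, hbn] with ω ihω hbω
      have hcast : ((n + 1 : ℕ) : ℤ) = (n : ℤ) + 1 := by push_cast; ring
      have hMsucc : M (n + 1) ω = M n ω
          + (θ ((n : ℤ) + 1) ω - (μ[θ ((n : ℤ) + 1) | ℱ (((n : ℤ) + 1) - 1)]) ω) := by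
        rw [hM, hM, Finset.sum_Icc_succ_top (by omega)]
        norm_num [hcast]
      have hYsucc : ∑ i ∈ Finset.Icc 1 (n + 1), Y (i : ℤ) ω
          = (∑ i ∈ Finset.Icc 1 n, Y (i : ℤ) ω) + Y ((n : ℤ) + 1) ω := by
        rw [Finset.sum_Icc_succ_top (by omega)]
        norm_num [hcast]
      simp only [Pi.sub_apply] at hbω
      rw [hYsucc, ihω, hMsucc, hbω, hcast, hQ, hQ, hQ]
      simp only [Pi.sub_apply, show (n : ℤ) + 1 - 1 = (n : ℤ) from by ring]
      ring
  -- the martingale property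
  · set 𝒢 : Filtration ℕ m0 :=
      ⟨fun n : ℕ => ℱ (n : ℤ), fun n₁ n₂ h => ℱ.mono (by exact_mod_cast h), fun n => ℱ.le _⟩
    have hθmeas : ∀ k : ℤ, StronglyMeasurable[ℱ k] (θ k) := by
      intro k
      have h : StronglyMeasurable[ℱ k] fun ω => ∑ j ∈ Finset.Ico k (k + m), (μ[Y j | ℱ k]) ω :=
        Finset.stronglyMeasurable_fun_sum _ fun j _ => stronglyMeasurable_condExp
      have he : θ k = fun ω => ∑ j ∈ Finset.Ico k (k + m), (μ[Y j | ℱ k]) ω := by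
        rw [hθ]; ext ω; simp
      rw [he]; exact h
    have hMadp : StronglyAdapted 𝒢 M := by
      intro n
      have : StronglyMeasurable[𝒢 n] fun ω => ∑ k ∈ Finset.Icc 1 n,
          (θ (k : ℤ) ω - (μ[θ (k : ℤ) | ℱ ((k : ℤ) - 1)]) ω) := by
        refine Finset.stronglyMeasurable_fun_sum _ fun k hk => ?_
        rw [Finset.mem_Icc] at hk
        have hk' : (k : ℤ) ≤ (n : ℤ) := by exact_mod_cast hk.2
        exact ((hθmeas (k : ℤ)).mono (ℱ.mono hk')).sub
          (stronglyMeasurable_condExp.mono (ℱ.mono (by omega)))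
      have hMeq : M n = fun ω => ∑ k ∈ Finset.Icc 1 n,
          (θ (k : ℤ) ω - (μ[θ (k : ℤ) | ℱ ((k : ℤ) - 1)]) ω) := funext (hM n)
      rw [hMeq]; exact this
    have hMint : ∀ n, Integrable (M n) μ := by
      intro n
      have : Integrable (fun ω => ∑ k ∈ Finset.Icc 1 n,
          (θ (k : ℤ) ω - (μ[θ (k : ℤ) | ℱ ((k : ℤ) - 1)]) ω)) μ := by
        apply integrable_finset_sum
        exact fun k _ => (hθint _).sub integrable_condExp
      exact this.congr (Filter.Eventually.of_forall fun ω => (hM n ω).symm)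
    refine martingale_of_condExp_sub_eq_zero_nat hMadp hMint fun n => ?_
    have hcast : ((n + 1 : ℕ) : ℤ) = (n : ℤ) + 1 := by push_cast; ring
    have hdiff : M (n + 1) - M n
        = θ ((n : ℤ) + 1) - μ[θ ((n : ℤ) + 1) | ℱ (n : ℤ)] := by
      funext ω
      simp only [Pi.sub_apply]
      rw [hM, hM, Finset.sum_Icc_succ_top (by omega)]
      norm_num [hcast, show (n : ℤ) + 1 - 1 = (n : ℤ) by ring]
    rw [hdiff]
    have h1 : μ[θ ((n : ℤ) + 1) - μ[θ ((n : ℤ) + 1) | ℱ (n : ℤ)] | 𝒢 n] =ᵐ[μ]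
        μ[θ ((n : ℤ) + 1) | ℱ (n : ℤ)] - μ[μ[θ ((n : ℤ) + 1) | ℱ (n : ℤ)] | ℱ (n : ℤ)] :=
      condExp_sub (hθint _) integrable_condExp _
    have h2 : μ[μ[θ ((n : ℤ) + 1) | ℱ (n : ℤ)] | ℱ (n : ℤ)] = μ[θ ((n : ℤ) + 1) | ℱ (n : ℤ)] :=
      condExp_of_stronglyMeasurable (ℱ.le _) stronglyMeasurable_condExp integrable_condExp
    rw [h2] at h1
    refine h1.trans ?_
    filter_upwards with ω; simp
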